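/- Let I and w encode a valid map domain, i.e., any two 1-bits of I are at least w bit positions apart, with w ≥ 1. Define MASK(I,w) = (I <<< w) - I. Then for every bit position p, MASK(I,w) has a 1 at position p if and only if there exists a 1-bit of I at some position q with q ≤ p < q + w. -/

import Mathlib

/-- `I` is `w`-sparse: any two 1-bits of `I` are at least `w` positions apart. -/
def Sparse (I w : ℕ) : Prop :=
  ∀ p q : ℕ, I.testBit p → I.testBit q → p < q → p + w ≤ q

theorem mask_testBit (I w : ℕ) (hw : 1 ≤ w) (hI : Sparse I w) (p : ℕ) :
    ((I <<< w) - I).testBit p ↔ ∃ q : ℕ, I.testBit q ∧ q ≤ p ∧ p < q + w := by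
  have hmask : ∀ n : ℕ, (n <<< w) - n = (2 ^ w - 1) * n := by
    intro n
    rw [Nat.shiftLeft_eq, Nat.sub_mul, one_mul, mul_comm]
  rw [hmask]
  clear hmask
  induction I using Nat.strong_induction_on generalizing p with
  | _ n ih =>
    rcases eq_or_ne n 0 with rfl | hn
    · simp
    · have hex : ∃ i, n.testBit i = true := Nat.exists_testBit_of_ne_zero hn
      set q0 := Nat.find hex with hq0def
      have hq0 : n.testBit q0 = true := Nat.find_spec hex
      have hmin : ∀ r, r < q0 → n.testBit r = false := by
        intro r hr
        simpa using Nat.find_min hex hr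
      -- n % 2^(q0+w) = 2^q0
      have hmod : n % 2 ^ (q0 + w) = 2 ^ q0 := by
        apply Nat.eq_of_testBit_eq
        intro j
        rw [Nat.testBit_mod_two_pow, Nat.testBit_two_pow]
        rcases lt_trichotomy j q0 with h | rfl | h
        · simp [hmin j h, Nat.ne_of_gt h]
        · simp [hq0]
          omega
        · by_cases hjw : j < q0 + w
          · have : n.testBit j = false := by
              by_contra hc
              have hc' : n.testBit j = true := by simpa using hc
              have := hI q0 j hq0 hc' h
              omega
            simp [this, Nat.ne_of_lt h]
          · simp [hjw, Nat.ne_of_lt h]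
      set J := n / 2 ^ (q0 + w) with hJdef
      have hnJ : n = 2 ^ (q0 + w) * J + 2 ^ q0 := by
        conv_lhs => rw [← Nat.div_add_mod n (2 ^ (q0 + w))]
        rw [hmod]
      have hJbit : ∀ r, J.testBit r = n.testBit (q0 + w + r) := by
        intro r
        rw [hJdef, ← Nat.shiftRight_eq_div_pow, Nat.testBit_shiftRight]
      have hJlt : J < n := by
        apply Nat.div_lt_self (Nat.pos_of_ne_zero hn)
        have : 1 < 2 ^ 1 := by norm_num
        calc 1 < 2 ^ 1 := this
          _ ≤ 2 ^ (q0 + w) := Nat.pow_le_pow_right (by norm_num) (by omega)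
      have hJsp : Sparse J w := by
        intro a b ha hb hab
        rw [hJbit] at ha hb
        have := hI (q0 + w + a) (q0 + w + b) ha hb (by omega)
        omega
      -- the low block is small
      have hlow : (2 ^ w - 1) * 2 ^ q0 < 2 ^ (q0 + w) := by
        rw [pow_add]
        calc (2 ^ w - 1) * 2 ^ q0 < 2 ^ w * 2 ^ q0 := by
              have h1 : 2 ^ w - 1 < 2 ^ w := by
                have := Nat.two_pow_pos w; omega
              exact (Nat.mul_lt_mul_right (Nat.two_pow_pos q0)).mpr h1
          _ = 2 ^ q0 * 2 ^ w := by ring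
      have h2q0lt : (2 : ℕ) ^ q0 < 2 ^ (q0 + w) :=
        Nat.pow_lt_pow_right (by norm_num) (by omega)
      -- bit characterization of n
      have hnbit : ∀ q : ℕ, n.testBit q =
          if q < q0 + w then decide (q0 = q) else J.testBit (q - (q0 + w)) := by
        intro q
        conv_lhs => rw [hnJ]
        rw [Nat.testBit_two_pow_mul_add _ h2q0lt]
        by_cases h : q < q0 + w <;> simp [h, Nat.testBit_two_pow]
      -- mask decomposition
      have hmaskeq : (2 ^ w - 1) * n =
          2 ^ (q0 + w) * ((2 ^ w - 1) * J) + (2 ^ w - 1) * 2 ^ q0 := by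
        rw [hnJ]; ring
      have hlowbit : ∀ j, ((2 ^ w - 1) * 2 ^ q0).testBit j =
          (decide (q0 ≤ j) && decide (j < q0 + w)) := by
        intro j
        rw [mul_comm, Nat.testBit_two_pow_mul, Nat.testBit_two_pow_sub_one]
        by_cases h : q0 ≤ j <;> simp [h] <;> omega
      rw [hmaskeq, Nat.testBit_two_pow_mul_add _ hlow]
      by_cases hp : p < q0 + w
      · simp only [hp, if_true, hlowbit]
        constructor
        · intro h
          simp only [Bool.and_eq_true, decide_eq_true_eq] at h
          exact ⟨q0, hq0, h.1, by omega⟩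
        · rintro ⟨q, hq, h1, h2⟩
          rw [hnbit] at hq
          have hqlt : q < q0 + w := by omega
          simp only [hqlt, if_true, decide_eq_true_eq] at hq
          subst hq
          simp [h1, hp]
      · simp only [hp, if_false]
        have hIH := ih J hJlt hJsp (p - (q0 + w))
        constructor
        · intro hbit
          obtain ⟨r, hr, h1, h2⟩ := hIH.mp hbit
          refine ⟨q0 + w + r, ?_, by omega, by omega⟩
          rw [hnbit]
          have : ¬ (q0 + w + r < q0 + w) := by omega
          simp only [this, if_false]
          simpa using hr
        · rintro ⟨q, hq, h1, h2⟩
          apply hIH.mpr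
          rw [hnbit] at hq
          by_cases hqlt : q < q0 + w
          · simp only [hqlt, if_true, decide_eq_true_eq] at hq
            omega
          · simp only [hqlt, if_false] at hq
            exact ⟨q - (q0 + w), hq, by omega, by omega⟩
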